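/- For d ≥ 2 and nonnegative reals a, b with a² + b² = 1, one has ab + √((d−1)/d)·b² ≤ √(d/(d−1))·ab + a² whenever a ≥ b; more generally, max over the constraint set of ab + √((d−1)/d)·b² is at most the max of √(d/(d−1))·ab + a², which equals 1/2 + (1/2)√((2d−1)/(d−1)). -/

import Mathlib

/-- For `a, b ≥ 0` with `a² + b² = 1`: if `a ≥ b` then
`ab + √((d−1)/d)·b² ≤ √(d/(d−1))·ab + a²`, and in any case
`ab + √((d−1)/d)·b² ≤ 1/2 + (1/2)√((2d−1)/(d−1))`. -/
theorem second_max_dominated (d : ℕ) (hd : 2 ≤ d) (a b : ℝ)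
    (ha : 0 ≤ a) (hb : 0 ≤ b) (hab : a ^ 2 + b ^ 2 = 1) :
    (b ≤ a →
      a * b + Real.sqrt (((d : ℝ) - 1) / (d : ℝ)) * b ^ 2
        ≤ Real.sqrt ((d : ℝ) / ((d : ℝ) - 1)) * a * b + a ^ 2)
    ∧ a * b + Real.sqrt (((d : ℝ) - 1) / (d : ℝ)) * b ^ 2
        ≤ 1 / 2 + (1 / 2) * Real.sqrt ((2 * (d : ℝ) - 1) / ((d : ℝ) - 1)) := by
  have hd2 : (2:ℝ) ≤ (d:ℝ) := by exact_mod_cast hd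
  have hdpos : (0:ℝ) < d := by linarith
  have hdm1 : (0:ℝ) < (d:ℝ) - 1 := by linarith
  set c := Real.sqrt (((d:ℝ)-1)/d) with hc
  have hcnn : 0 ≤ c := Real.sqrt_nonneg _
  have hc2 : c ^ 2 = ((d:ℝ)-1)/d := Real.sq_sqrt (by positivity)
  have hfrac : ((d:ℝ)-1)/(d:ℝ) ≤ 1 := by rw [div_le_one hdpos]; linarith
  have hcle : c ≤ 1 := by nlinarith [hc2, hcnn, hfrac]
  constructor
  · intro hba
    have h1 : (1:ℝ) ≤ Real.sqrt ((d:ℝ)/((d:ℝ)-1)) := by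
      rw [Real.le_sqrt' one_pos, one_pow, le_div_iff₀ hdm1]; linarith
    have hb2 : b^2 ≤ a^2 := by nlinarith
    nlinarith [mul_nonneg ha hb, mul_le_mul_of_nonneg_right h1 (mul_nonneg ha hb),
      mul_le_mul_of_nonneg_right hcle (sq_nonneg b)]
  · have hcs : 2*a*b + c*(b^2-a^2) ≤ Real.sqrt (1+c^2) := by
      have huv : (2*a*b)^2 + (b^2-a^2)^2 = 1 := by rw [← (one_pow 2 : (1:ℝ)^2 = 1), ← hab]; ring
      have h3 : (1+c^2)*((2*a*b)^2+(b^2-a^2)^2) = 1+c^2 := by rw [huv]; ring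
      have h1 : (2*a*b + c*(b^2-a^2))^2 ≤ 1 + c^2 := by
        nlinarith [sq_nonneg (c*(2*a*b) - (b^2-a^2)), h3]
      calc 2*a*b + c*(b^2-a^2) ≤ |2*a*b + c*(b^2-a^2)| := le_abs_self _
        _ = Real.sqrt ((2*a*b + c*(b^2-a^2))^2) := (Real.sqrt_sq_eq_abs _).symm
        _ ≤ Real.sqrt (1+c^2) := Real.sqrt_le_sqrt h1
    have hc1 : c*(a^2+b^2) = c := by rw [hab]; ring
    have key : a*b + c*b^2 ≤ c/2 + Real.sqrt (1+c^2)/2 := by nlinarith [hcs, hc1]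
    have h2 : Real.sqrt (1+c^2) ≤ Real.sqrt ((2*(d:ℝ)-1)/((d:ℝ)-1)) := by
      apply Real.sqrt_le_sqrt
      rw [hc2]
      have e1 : (1:ℝ) + ((d:ℝ)-1)/(d:ℝ) = (2*(d:ℝ)-1)/(d:ℝ) := by field_simp; ring
      rw [e1]
      gcongr
      · linarith
      · linarith
    linarith
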